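/- Let X be a real n×p matrix with rank(X) = p, X† = (XᵀX)⁻¹Xᵀ, and β₀ ∈ ℝᵖ. On a probability space, let S : Ω → ℝ^{r×n} (p ≤ r ≤ n) be a random matrix with rank(S(ω)X) = p almost surely, let Y(ω) be the Moore–Penrose inverse of S(ω)X, set P(ω) = XY(ω)S(ω) and P_X = X(XᵀX)⁻¹Xᵀ, and let ε : Ω → ℝⁿ be independent of S with E[ε_i] = 0 and E[ε_iε_j] = σ²δ_{ij} (σ > 0); assume square-integrability of all relevant entries. Set β̃ = YS(Xβ₀ + ε) and β̂ = X†(Xβ₀ + ε). Then the total mean squared error satisfies MSE(β̃, β₀) := E[‖β̃ − β₀‖₂²] = σ²·trace((XᵀX)⁻¹) + σ²·trace(X†(E[PPᵀ] − P_X)(X†)ᵀ), and consequently MSE(β̃, β₀) ≥ MSE(β̂, β₀) = σ²·trace((XᵀX)⁻¹). -/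

import Mathlib

open Matrix MeasureTheory

section Aux

variable {α : Type*} [MeasurableSpace α]

private lemma measMul' {a b c : ℕ} {f : α → Matrix (Fin a) (Fin b) ℝ}
    {g : α → Matrix (Fin b) (Fin c) ℝ}
    (hf : ∀ i j, Measurable fun x => f x i j) (hg : ∀ i j, Measurable fun x => g x i j)
    (i : Fin a) (j : Fin c) : Measurable fun x => (f x * g x) i j := by
  simp_rw [Matrix.mul_apply]
  exact Finset.measurable_sum _ fun k _ => (hf i k).mul (hg k j)

private lemma measDet' {a : ℕ} {f : α → Matrix (Fin a) (Fin a) ℝ}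
    (hf : ∀ i j, Measurable fun x => f x i j) : Measurable fun x => (f x).det := by
  simp_rw [Matrix.det_apply']
  exact Finset.measurable_sum _ fun σ _ =>
    (Finset.measurable_prod _ fun i _ => hf (σ i) i).const_mul _

private lemma measAdj' {a : ℕ} {f : α → Matrix (Fin a) (Fin a) ℝ}
    (hf : ∀ i j, Measurable fun x => f x i j) (i j : Fin a) :
    Measurable fun x => (f x).adjugate i j := by
  simp_rw [Matrix.adjugate_apply]
  apply measDet'
  intro k l
  simp_rw [Matrix.updateRow_apply]
  split_ifs
  · exact measurable_const
  · exact hf k l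

private lemma measInv' {a : ℕ} {f : α → Matrix (Fin a) (Fin a) ℝ}
    (hf : ∀ i j, Measurable fun x => f x i j) (i j : Fin a) :
    Measurable fun x => (f x)⁻¹ i j := by
  simp_rw [Matrix.inv_def, Matrix.smul_apply, Ring.inverse_eq_inv, smul_eq_mul]
  exact ((measDet' hf).inv).mul (measAdj' hf i j)

end Aux

/-- The explicit left pseudoinverse formula. -/
noncomputable def pinvAux {r n p : ℕ} (X : Matrix (Fin n) (Fin p) ℝ)
    (M : Matrix (Fin r) (Fin n) ℝ) : Matrix (Fin p) (Fin n) ℝ :=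
  ((M * X)ᵀ * (M * X))⁻¹ * (M * X)ᵀ * M

lemma measurable_pinvAux {r n p : ℕ} (X : Matrix (Fin n) (Fin p) ℝ) :
    Measurable (fun (M : Fin r → Fin n → ℝ) (i : Fin p) (j : Fin n) =>
      pinvAux X (Matrix.of M) i j) := by
  apply measurable_pi_lambda
  intro i
  apply measurable_pi_lambda
  intro j
  have hM : ∀ (a : Fin r) (b : Fin n), Measurable fun M : Fin r → Fin n → ℝ => Matrix.of M a b :=
    fun a b => (measurable_pi_apply b).comp (measurable_pi_apply a)
  have hMX : ∀ a b, Measurable fun M : Fin r → Fin n → ℝ => (Matrix.of M * X) a b :=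
    measMul' hM fun _ _ => measurable_const
  have hMXT : ∀ (a : Fin p) (b : Fin r),
      Measurable fun M : Fin r → Fin n → ℝ => (Matrix.of M * X)ᵀ a b := by
    intro a b
    simp_rw [Matrix.transpose_apply]
    exact hMX b a
  show Measurable fun M : Fin r → Fin n → ℝ =>
    ((((Matrix.of M * X)ᵀ * (Matrix.of M * X))⁻¹ * (Matrix.of M * X)ᵀ) * Matrix.of M) i j
  exact measMul' (measMul' (measInv' (measMul' hMXT hMX)) hMXT) hM i j

lemma isUnit_of_rank_eq {k : ℕ} (M : Matrix (Fin k) (Fin k) ℝ) (h : M.rank = k) : IsUnit M := by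
  rw [← Matrix.mulVec_surjective_iff_isUnit]
  have htop : LinearMap.range M.mulVecLin = ⊤ := by
    apply Submodule.eq_top_of_finrank_eq
    rw [← Matrix.rank, h, Module.finrank_pi]
    simp
  intro v
  exact LinearMap.range_eq_top.mp htop v

/-- If `M` has full column rank and `Y` satisfies Penrose conditions (1) and (3),
then `Y * M = 1` and `Y` is the explicit pseudoinverse. -/
lemma penrose_unique {r p : ℕ} (M : Matrix (Fin r) (Fin p) ℝ) (Y : Matrix (Fin p) (Fin r) ℝ)
    (h1 : M * Y * M = M) (h3 : (M * Y)ᵀ = M * Y) (hrk : M.rank = p) :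
    Y * M = 1 ∧ Y = (Mᵀ * M)⁻¹ * Mᵀ := by
  have hYM : (Y * M).rank = p := by
    have h1' : M * (Y * M) = M := by rw [← Matrix.mul_assoc, h1]
    have hle : M.rank ≤ (Y * M).rank := by
      conv_lhs => rw [← h1']
      exact Matrix.rank_mul_le_right M (Y * M)
    have hle2 : (Y * M).rank ≤ p := by
      simpa using Matrix.rank_le_card_width (Y * M)
    omega
  have hu : IsUnit (Y * M) := isUnit_of_rank_eq _ hYM
  have hid : (Y * M) * (Y * M) = (Y * M) * 1 := by
    rw [Matrix.mul_one]
    calc (Y * M) * (Y * M) = Y * (M * Y * M) := by simp only [Matrix.mul_assoc]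
    _ = Y * M := by rw [h1]
  have hYM1 : Y * M = 1 := hu.mul_left_cancel hid
  refine ⟨hYM1, ?_⟩
  have hMtM : (Mᵀ * M).rank = p := by rw [Matrix.rank_transpose_mul_self, hrk]
  have huM : IsUnit (Mᵀ * M) := isUnit_of_rank_eq _ hMtM
  have key : (Mᵀ * M) * Y = Mᵀ := by
    calc (Mᵀ * M) * Y = Mᵀ * (M * Y) := by rw [Matrix.mul_assoc]
    _ = Mᵀ * (M * Y)ᵀ := by rw [h3]
    _ = ((M * Y) * M)ᵀ := (Matrix.transpose_mul (M * Y) M).symm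
    _ = Mᵀ := by rw [h1]
  have hdet : IsUnit (Mᵀ * M).det := (Matrix.isUnit_iff_isUnit_det _).mp huM
  calc Y = ((Mᵀ * M)⁻¹ * (Mᵀ * M)) * Y := by rw [Matrix.nonsing_inv_mul _ hdet, Matrix.one_mul]
  _ = (Mᵀ * M)⁻¹ * ((Mᵀ * M) * Y) := by rw [Matrix.mul_assoc]
  _ = (Mᵀ * M)⁻¹ * Mᵀ := by rw [key]

lemma tr_sq {a b : ℕ} (M : Matrix (Fin a) (Fin b) ℝ) :
    (M * Mᵀ).trace = ∑ i, ∑ j, (M i j) ^ 2 := by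
  simp [Matrix.trace, Matrix.mul_apply, Matrix.diag, sq]

lemma tr_conj {p n : ℕ} (Xd : Matrix (Fin p) (Fin n) ℝ) (N : Matrix (Fin n) (Fin n) ℝ) :
    (Xd * N * Xdᵀ).trace = ∑ i, ∑ a, ∑ b, Xd i a * Xd i b * N a b := by
  simp only [Matrix.trace, Matrix.diag, Matrix.mul_apply, Matrix.transpose_apply,
    Finset.sum_mul]
  refine Finset.sum_congr rfl fun i _ => ?_
  rw [Finset.sum_comm]
  refine Finset.sum_congr rfl fun a _ => ?_
  refine Finset.sum_congr rfl fun b _ => ?_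
  ring

lemma L2mul {Ω : Type*} [MeasurableSpace Ω] {μ : Measure Ω} {f g : Ω → ℝ}
    (hf : MemLp f 2 μ) (hg : MemLp g 2 μ) : Integrable (fun ω => f ω * g ω) μ := by
  have h := hf.smul (p := 2) (q := 2) (r := 1) hg
  have h2 := memLp_one_iff_integrable.mp h
  have : (g • f) = fun ω => f ω * g ω := by
    funext ω; simp [mul_comm]
  rwa [this] at h2

lemma frob_min {n p : ℕ} (X : Matrix (Fin n) (Fin p) ℝ) (Xd B : Matrix (Fin p) (Fin n) ℝ)
    (hXdX : Xd * X = 1) (hXdT : Xdᵀ = X * (Xᵀ * X)⁻¹) (hB : B * X = 1) :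
    ∑ i, ∑ j, (Xd i j) ^ 2 ≤ ∑ i, ∑ j, (B i j) ^ 2 := by
  set D := B - Xd with hD
  have hDX : D * X = 0 := by rw [hD, Matrix.sub_mul, hB, hXdX, sub_self]
  have hDXd : D * Xdᵀ = 0 := by rw [hXdT, ← Matrix.mul_assoc, hDX, Matrix.zero_mul]
  have hXdD : Xd * Dᵀ = 0 := by
    have := congrArg Matrix.transpose hDXd
    rwa [Matrix.transpose_mul, Matrix.transpose_transpose, Matrix.transpose_zero] at this
  have hBB : B * Bᵀ = D * Dᵀ + Xd * Xdᵀ := by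
    have hBD : B = D + Xd := by rw [hD, sub_add_cancel]
    rw [hBD, Matrix.transpose_add, Matrix.add_mul, Matrix.mul_add, Matrix.mul_add,
      hDXd, hXdD, add_zero, zero_add]
  rw [← tr_sq, ← tr_sq, hBB, Matrix.trace_add]
  have : 0 ≤ (D * Dᵀ).trace := by
    rw [tr_sq]
    positivity
  linarith

lemma xd_facts {n p : ℕ} (X : Matrix (Fin n) (Fin p) ℝ) (hX : X.rank = p)
    (Xd : Matrix (Fin p) (Fin n) ℝ) (hXd : Xd = (Xᵀ * X)⁻¹ * Xᵀ) :
    Xd * X = 1 ∧ Xdᵀ = X * (Xᵀ * X)⁻¹ ∧ Xd * Xdᵀ = (Xᵀ * X)⁻¹ := by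
  have hrk : (Xᵀ * X).rank = p := by rw [Matrix.rank_transpose_mul_self, hX]
  have hu : IsUnit (Xᵀ * X) := isUnit_of_rank_eq _ hrk
  have hdet : IsUnit (Xᵀ * X).det := (Matrix.isUnit_iff_isUnit_det _).mp hu
  have h1 : Xd * X = 1 := by
    rw [hXd, Matrix.mul_assoc, Matrix.nonsing_inv_mul _ hdet]
  have h2 : Xdᵀ = X * (Xᵀ * X)⁻¹ := by
    rw [hXd, Matrix.transpose_mul, Matrix.transpose_transpose, Matrix.transpose_nonsing_inv,
      Matrix.transpose_mul, Matrix.transpose_transpose]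
  refine ⟨h1, h2, ?_⟩
  rw [h2, ← Matrix.mul_assoc, h1, Matrix.one_mul]

lemma key_integral {Ω : Type*} [MeasurableSpace Ω] {μ : Measure Ω} [IsProbabilityMeasure μ]
    {p n : ℕ} {σ : ℝ} (ε : Ω → Fin n → ℝ) (A : Ω → Matrix (Fin p) (Fin n) ℝ)
    (hεcov : ∀ i j, ∫ ω, ε ω i * ε ω j ∂μ = if i = j then σ ^ 2 else 0)
    (hint : ∀ i j k, Integrable (fun ω => A ω i j * A ω i k * (ε ω j * ε ω k)) μ)
    (heq : ∀ i j k, ∫ ω, A ω i j * A ω i k * (ε ω j * ε ω k) ∂μ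
        = (∫ ω, A ω i j * A ω i k ∂μ) * ∫ ω, ε ω j * ε ω k ∂μ) :
    ∫ ω, ∑ i, ((A ω *ᵥ ε ω) i) ^ 2 ∂μ = σ ^ 2 * ∑ i, ∑ j, ∫ ω, (A ω i j) ^ 2 ∂μ := by
  have hpt : ∀ ω, ∑ i, ((A ω *ᵥ ε ω) i) ^ 2
      = ∑ i, ∑ j, ∑ k, A ω i j * A ω i k * (ε ω j * ε ω k) := by
    intro ω
    refine Finset.sum_congr rfl fun i _ => ?_
    rw [sq, Matrix.mulVec, dotProduct, Finset.sum_mul_sum]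
    exact Finset.sum_congr rfl fun j _ => Finset.sum_congr rfl fun k _ => by ring
  calc ∫ ω, ∑ i, ((A ω *ᵥ ε ω) i) ^ 2 ∂μ
      = ∫ ω, ∑ i, ∑ j, ∑ k, A ω i j * A ω i k * (ε ω j * ε ω k) ∂μ :=
        integral_congr_ae (Filter.Eventually.of_forall hpt)
    _ = ∑ i, ∑ j, ∑ k, ∫ ω, A ω i j * A ω i k * (ε ω j * ε ω k) ∂μ := by
        rw [integral_finset_sum _ fun i _ => integrable_finset_sum _ fun j _ =>
          integrable_finset_sum _ fun k _ => hint i j k]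
        exact Finset.sum_congr rfl fun i _ => by
          rw [integral_finset_sum _ fun j _ => integrable_finset_sum _ fun k _ => hint i j k]
          exact Finset.sum_congr rfl fun j _ => integral_finset_sum _ fun k _ => hint i j k
    _ = ∑ i, ∑ j, (∫ ω, A ω i j * A ω i j ∂μ) * σ ^ 2 := by
        refine Finset.sum_congr rfl fun i _ => Finset.sum_congr rfl fun j _ => ?_
        simp_rw [heq, hεcov, mul_ite, mul_zero]
        rw [Finset.sum_ite_eq Finset.univ j (fun k => (∫ ω, A ω i j * A ω i k ∂μ) * σ ^ 2)]
        simp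
    _ = σ ^ 2 * ∑ i, ∑ j, ∫ ω, (A ω i j) ^ 2 ∂μ := by
        rw [Finset.mul_sum]
        refine Finset.sum_congr rfl fun i _ => ?_
        rw [Finset.mul_sum]
        refine Finset.sum_congr rfl fun j _ => ?_
        rw [mul_comm]
        congr 1
        exact integral_congr_ae (Filter.Eventually.of_forall fun ω => by simp [sq])

/-- total MSE conditioned on rank preservation:
if `rank(S(ω)X) = p` almost surely and `ε` (mean zero, covariance `σ²I`) is
independent of `S`, then
`MSE(β̃, β₀) = E‖β̃ - β₀‖₂² = σ² trace((XᵀX)⁻¹) + σ² trace(X†(E[PPᵀ] - P_X)(X†)ᵀ)`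
and consequently `MSE(β̃, β₀) ≥ MSE(β̂, β₀) = σ² trace((XᵀX)⁻¹)`. -/
theorem total_mse_rank_preserved
    {n p r : ℕ} (X : Matrix (Fin n) (Fin p) ℝ) (hX : X.rank = p)
    (hpr : p ≤ r) (hrn : r ≤ n)
    (Xd : Matrix (Fin p) (Fin n) ℝ) (hXd : Xd = (Xᵀ * X)⁻¹ * Xᵀ)
    (PX : Matrix (Fin n) (Fin n) ℝ) (hPX : PX = X * (Xᵀ * X)⁻¹ * Xᵀ)
    {Ω : Type*} [MeasurableSpace Ω] (μ : Measure Ω) [IsProbabilityMeasure μ]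
    (S : Ω → Matrix (Fin r) (Fin n) ℝ)
    (Y : Ω → Matrix (Fin p) (Fin r) ℝ)
    (hp1 : ∀ ω, (S ω * X) * Y ω * (S ω * X) = S ω * X)
    (hp2 : ∀ ω, Y ω * ((S ω * X) * Y ω) = Y ω)
    (hp3 : ∀ ω, ((S ω * X) * Y ω)ᵀ = (S ω * X) * Y ω)
    (hp4 : ∀ ω, (Y ω * (S ω * X))ᵀ = Y ω * (S ω * X))
    (hrank : ∀ᵐ ω ∂μ, (S ω * X).rank = p)
    (P : Ω → Matrix (Fin n) (Fin n) ℝ) (hP : ∀ ω, P ω = X * Y ω * S ω)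
    (β₀ : Fin p → ℝ) (σ : ℝ) (hσ : 0 < σ) (ε : Ω → Fin n → ℝ)
    (hindep : ProbabilityTheory.IndepFun ε
      ((fun ω i j => S ω i j) : Ω → Fin r → Fin n → ℝ) μ)
    (hεL2 : ∀ i, MemLp (fun ω => ε ω i) 2 μ)
    (hεmean : ∀ i, ∫ ω, ε ω i ∂μ = 0)
    (hεcov : ∀ i j, ∫ ω, ε ω i * ε ω j ∂μ = if i = j then σ ^ 2 else 0)
    (hYSL2 : ∀ i j, MemLp (fun ω => (Y ω * S ω) i j) 2 μ)
    (hPPTint : ∀ i j, Integrable (fun ω => (P ω * (P ω)ᵀ) i j) μ)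
    (EPPT : Matrix (Fin n) (Fin n) ℝ)
    (hEPPT : ∀ i j, EPPT i j = ∫ ω, (P ω * (P ω)ᵀ) i j ∂μ)
    (βtilde : Ω → Fin p → ℝ)
    (hβtilde : ∀ ω, βtilde ω = Y ω *ᵥ (S ω *ᵥ (X *ᵥ β₀ + ε ω)))
    (hMSEint : Integrable (fun ω => ∑ i, (βtilde ω i - β₀ i) ^ 2) μ)
    (βhat : Ω → Fin p → ℝ)
    (hβhat : ∀ ω, βhat ω = Xd *ᵥ (X *ᵥ β₀ + ε ω)) :
    (∫ ω, ∑ i, (βtilde ω i - β₀ i) ^ 2 ∂μ) =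
      σ ^ 2 * ((Xᵀ * X)⁻¹ : Matrix (Fin p) (Fin p) ℝ).trace +
        σ ^ 2 * (Xd * (EPPT - PX) * Xdᵀ).trace ∧
    (∫ ω, ∑ i, (βhat ω i - β₀ i) ^ 2 ∂μ) =
      σ ^ 2 * ((Xᵀ * X)⁻¹ : Matrix (Fin p) (Fin p) ℝ).trace ∧
    (∫ ω, ∑ i, (βhat ω i - β₀ i) ^ 2 ∂μ) ≤
      ∫ ω, ∑ i, (βtilde ω i - β₀ i) ^ 2 ∂μ := by
  classical
  obtain ⟨hXdX, hXdT, hXdXd⟩ := xd_facts X hX Xd hXd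
  -- a.e. facts from rank preservation
  have hae : ∀ᵐ ω ∂μ, Y ω * (S ω * X) = 1 ∧ Y ω * S ω = pinvAux X (S ω) := by
    filter_upwards [hrank] with ω hω
    obtain ⟨h1', h2'⟩ := penrose_unique (S ω * X) (Y ω) (hp1 ω) (hp3 ω) hω
    refine ⟨h1', ?_⟩
    rw [pinvAux, h2']
  set A' : Ω → Matrix (Fin p) (Fin n) ℝ := fun ω => pinvAux X (S ω) with hA'def
  have hAA' : ∀ᵐ ω ∂μ, Y ω * S ω = A' ω := hae.mono fun ω h => h.2
  have hA'L2 : ∀ i j, MemLp (fun ω => A' ω i j) 2 μ := fun i j =>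
    (hYSL2 i j).ae_eq (hAA'.mono fun ω h => by rw [h])
  -- independence of entries
  have hIndep : ∀ (i : Fin p) (j k : Fin n),
      ProbabilityTheory.IndepFun (fun ω => A' ω i j * A' ω i k)
        (fun ω => ε ω j * ε ω k) μ := by
    intro i j k
    have hφ : Measurable (fun M : Fin r → Fin n → ℝ =>
        pinvAux X (Matrix.of M) i j * pinvAux X (Matrix.of M) i k) :=
      ((measurable_pi_apply j).comp ((measurable_pi_apply i).comp
        (measurable_pinvAux X))).mul
      ((measurable_pi_apply k).comp ((measurable_pi_apply i).comp (measurable_pinvAux X)))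
    have hψ : Measurable (fun v : Fin n → ℝ => v j * v k) :=
      (measurable_pi_apply j).mul (measurable_pi_apply k)
    exact (hindep.symm.comp hφ hψ)
  have hL2e : ∀ j k, Integrable (fun ω => ε ω j * ε ω k) μ :=
    fun j k => L2mul (hεL2 j) (hεL2 k)
  have hintA : ∀ i j k, Integrable (fun ω => A' ω i j * A' ω i k) μ :=
    fun i j k => L2mul (hA'L2 i j) (hA'L2 i k)
  have hint : ∀ (i : Fin p) (j k : Fin n),
      Integrable (fun ω => A' ω i j * A' ω i k * (ε ω j * ε ω k)) μ :=
    fun i j k => (hIndep i j k).integrable_mul (hintA i j k) (hL2e j k)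
  have heq : ∀ (i : Fin p) (j k : Fin n),
      ∫ ω, A' ω i j * A' ω i k * (ε ω j * ε ω k) ∂μ
        = (∫ ω, A' ω i j * A' ω i k ∂μ) * ∫ ω, ε ω j * ε ω k ∂μ :=
    fun i j k => (hIndep i j k).integral_fun_mul_eq_mul_integral (hintA i j k).aestronglyMeasurable
      (hL2e j k).aestronglyMeasurable
  -- βtilde pointwise a.e.
  have hβt : ∀ᵐ ω ∂μ, ∑ i, (βtilde ω i - β₀ i) ^ 2 = ∑ i, ((A' ω *ᵥ ε ω) i) ^ 2 := by
    filter_upwards [hae] with ω hω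
    have hb : βtilde ω = β₀ + A' ω *ᵥ ε ω := by
      rw [hβtilde ω, Matrix.mulVec_mulVec, Matrix.mulVec_add, Matrix.mulVec_mulVec,
        Matrix.mul_assoc, hω.1, Matrix.one_mulVec, hω.2]
    refine Finset.sum_congr rfl fun i _ => ?_
    rw [hb]
    simp
  have hMSEt : ∫ ω, ∑ i, (βtilde ω i - β₀ i) ^ 2 ∂μ
      = σ ^ 2 * ∑ i, ∑ j, ∫ ω, (A' ω i j) ^ 2 ∂μ := by
    rw [integral_congr_ae hβt]
    exact key_integral ε A' hεcov hint heq
  -- identify the sum with the trace expression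
  have hXdP : ∀ ω, Xd * P ω = Y ω * S ω := fun ω => by
    rw [hP ω, ← Matrix.mul_assoc, ← Matrix.mul_assoc, hXdX, Matrix.one_mul]
  have hconj : ∀ ω, Xd * (P ω * (P ω)ᵀ) * Xdᵀ = (Y ω * S ω) * (Y ω * S ω)ᵀ := fun ω => by
    have h : Xd * (P ω * (P ω)ᵀ) * Xdᵀ = (Xd * P ω) * ((P ω)ᵀ * Xdᵀ) := by
      simp only [Matrix.mul_assoc]
    rw [h, ← Matrix.transpose_mul, hXdP]
  have hsqint : ∀ i j, Integrable (fun ω => (A' ω i j) ^ 2) μ :=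
    fun i j => (hA'L2 i j).integrable_sq
  have hsum_int : ∑ i, ∑ j, ∫ ω, (A' ω i j) ^ 2 ∂μ
      = ∫ ω, ∑ i, ∑ j, (A' ω i j) ^ 2 ∂μ := by
    rw [integral_finset_sum _ fun i _ => integrable_finset_sum _ fun j _ => hsqint i j]
    exact Finset.sum_congr rfl fun i _ =>
      (integral_finset_sum _ fun j _ => hsqint i j).symm
  have htrace : ∫ ω, ∑ i, ∑ j, (A' ω i j) ^ 2 ∂μ = (Xd * EPPT * Xdᵀ).trace := by
    have h1 : ∀ᵐ ω ∂μ, ∑ i, ∑ j, (A' ω i j) ^ 2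
        = ∑ i, ∑ a, ∑ b, Xd i a * Xd i b * (P ω * (P ω)ᵀ) a b := by
      filter_upwards [hAA'] with ω hω
      rw [← tr_conj, hconj ω, hω, tr_sq]
    rw [integral_congr_ae h1, tr_conj]
    rw [integral_finset_sum _ fun i _ => integrable_finset_sum _ fun a _ =>
      integrable_finset_sum _ fun b _ => (hPPTint a b).const_mul _]
    refine Finset.sum_congr rfl fun i _ => ?_
    rw [integral_finset_sum _ fun a _ => integrable_finset_sum _ fun b _ =>
      (hPPTint a b).const_mul _]
    refine Finset.sum_congr rfl fun a _ => ?_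
    rw [integral_finset_sum _ fun b _ => (hPPTint a b).const_mul _]
    refine Finset.sum_congr rfl fun b _ => ?_
    rw [MeasureTheory.integral_const_mul, hEPPT a b]
  -- right-hand side algebra
  have hPXd : Xd * PX = Xd := by
    rw [hPX, ← Matrix.mul_assoc, ← Matrix.mul_assoc, hXdX, Matrix.one_mul, ← hXd]
  have hRHSalg : σ ^ 2 * ((Xᵀ * X)⁻¹ : Matrix (Fin p) (Fin p) ℝ).trace
      + σ ^ 2 * (Xd * (EPPT - PX) * Xdᵀ).trace = σ ^ 2 * (Xd * EPPT * Xdᵀ).trace := by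
    have h2 : Xd * (EPPT - PX) * Xdᵀ = Xd * EPPT * Xdᵀ - Xd * PX * Xdᵀ := by
      rw [Matrix.mul_sub, Matrix.sub_mul]
    have h3 : Xd * PX * Xdᵀ = (Xᵀ * X)⁻¹ := by rw [hPXd, hXdXd]
    rw [h2, h3, Matrix.trace_sub]
    ring
  have goal1 : (∫ ω, ∑ i, (βtilde ω i - β₀ i) ^ 2 ∂μ) =
      σ ^ 2 * ((Xᵀ * X)⁻¹ : Matrix (Fin p) (Fin p) ℝ).trace +
        σ ^ 2 * (Xd * (EPPT - PX) * Xdᵀ).trace := by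
    rw [hMSEt, hsum_int, htrace]
    exact hRHSalg.symm
  -- βhat
  have hβh : ∀ ω, ∑ i, (βhat ω i - β₀ i) ^ 2 = ∑ i, ((Xd *ᵥ ε ω) i) ^ 2 := fun ω => by
    have hb : βhat ω = β₀ + Xd *ᵥ ε ω := by
      rw [hβhat ω, Matrix.mulVec_add, Matrix.mulVec_mulVec, hXdX, Matrix.one_mulVec]
    refine Finset.sum_congr rfl fun i _ => ?_
    rw [hb]
    simp
  have hMSEh : ∫ ω, ∑ i, (βhat ω i - β₀ i) ^ 2 ∂μ
      = σ ^ 2 * ∑ i, ∑ j, (Xd i j) ^ 2 := by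
    rw [integral_congr_ae (Filter.Eventually.of_forall hβh)]
    have hkey := key_integral (μ := μ) ε (fun _ => Xd) hεcov
      (fun i j k => (hL2e j k).const_mul (Xd i j * Xd i k))
      (fun i j k => by
        show (∫ ω, Xd i j * Xd i k * (ε ω j * ε ω k) ∂μ) =
          (∫ (_ : Ω), Xd i j * Xd i k ∂μ) * ∫ ω, ε ω j * ε ω k ∂μ
        rw [MeasureTheory.integral_const_mul, integral_const]
        simp)
    rw [hkey]
    congr 1
    refine Finset.sum_congr rfl fun i _ => Finset.sum_congr rfl fun j _ => ?_
    simp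
  have hXdtr : ∑ i, ∑ j, (Xd i j) ^ 2
      = ((Xᵀ * X)⁻¹ : Matrix (Fin p) (Fin p) ℝ).trace := by
    rw [← tr_sq, hXdXd]
  have goal2 : (∫ ω, ∑ i, (βhat ω i - β₀ i) ^ 2 ∂μ) =
      σ ^ 2 * ((Xᵀ * X)⁻¹ : Matrix (Fin p) (Fin p) ℝ).trace := by
    rw [hMSEh, hXdtr]
  -- inequality
  have hfm : ∀ᵐ ω ∂μ, ∑ i, ∑ j, (Xd i j) ^ 2 ≤ ∑ i, ∑ j, (A' ω i j) ^ 2 := by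
    filter_upwards [hae] with ω hω
    refine frob_min X Xd (A' ω) hXdX hXdT ?_
    show pinvAux X (S ω) * X = 1
    rw [← hω.2, Matrix.mul_assoc, hω.1]
  have hineq : ∑ i, ∑ j, (Xd i j) ^ 2 ≤ ∫ ω, ∑ i, ∑ j, (A' ω i j) ^ 2 ∂μ := by
    have h0 : (∫ _ω, ∑ i, ∑ j, (Xd i j) ^ 2 ∂μ) = ∑ i, ∑ j, (Xd i j) ^ 2 := by simp
    rw [← h0]
    exact integral_mono_ae (integrable_const _)
      (integrable_finset_sum _ fun i _ => integrable_finset_sum _ fun j _ => hsqint i j) hfm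
  refine ⟨goal1, goal2, ?_⟩
  rw [hMSEh, hMSEt, hsum_int]
  exact mul_le_mul_of_nonneg_left hineq (sq_nonneg σ)
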